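/- If {X_1, …, X_{n_1}} and {Y_1, …, Y_{n_2}} are each a set of negatively associated real-valued random variables, and the two sets are independent of each other, then their union {X_1, …, X_{n_1}, Y_1, …, Y_{n_2}} is a set of negatively associated random variables. -/

import Mathlib

open MeasureTheory ProbabilityTheory

/-- Covariance of two real-valued functions with respect to a measure. -/
noncomputable def covar {Ω : Type*} [MeasurableSpace Ω] (μ : Measure Ω) (f g : Ω → ℝ) : ℝ :=
  (∫ ω, f ω * g ω ∂μ) - (∫ ω, f ω ∂μ) * ∫ ω, g ω ∂μ

/-- Negative association of a finite family of real-valued random variables. -/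
def NegAssoc {Ω : Type*} [MeasurableSpace Ω] (μ : Measure Ω) {n : ℕ}
    (X : Fin n → Ω → ℝ) : Prop :=
  ∀ A₁ A₂ : Finset (Fin n), Disjoint A₁ A₂ →
    ∀ f₁ : ({ i // i ∈ A₁ } → ℝ) → ℝ, ∀ f₂ : ({ i // i ∈ A₂ } → ℝ) → ℝ,
      Monotone f₁ → Monotone f₂ → Measurable f₁ → Measurable f₂ →
      Integrable (fun ω => f₁ (fun i => X i.1 ω)) μ →
      Integrable (fun ω => f₂ (fun i => X i.1 ω)) μ →
      Integrable (fun ω => f₁ (fun i => X i.1 ω) * f₂ (fun i => X i.1 ω)) μ →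
      covar μ (fun ω => f₁ (fun i => X i.1 ω)) (fun ω => f₂ (fun i => X i.1 ω)) ≤ 0

section Aux

open Filter

lemma NA_integrable_of_bdd {Ω : Type*} [MeasurableSpace Ω] {μ : Measure Ω}
    [IsFiniteMeasure μ] {f : Ω → ℝ} (hm : AEStronglyMeasurable f μ) {C : ℝ}
    (hb : ∀ ω, |f ω| ≤ C) : Integrable f μ :=
  Integrable.mono' (integrable_const C) hm (Filter.Eventually.of_forall fun ω => by
    simpa [Real.norm_eq_abs] using hb ω)

noncomputable def NAtrunc (M : ℝ) (t : ℝ) : ℝ := max (min t M) (-M)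

lemma NAtrunc_mono (M : ℝ) : Monotone (NAtrunc M) :=
  fun _ _ h => max_le_max (min_le_min h le_rfl) le_rfl

lemma NAtrunc_meas (M : ℝ) : Measurable (NAtrunc M) :=
  (measurable_id.min measurable_const).max measurable_const

lemma NAtrunc_cont (M : ℝ) : Continuous (NAtrunc M) :=
  (continuous_id.min continuous_const).max continuous_const

lemma abs_NAtrunc_le (M t : ℝ) (hM : 0 ≤ M) : |NAtrunc M t| ≤ |t| := by
  rw [abs_le]
  constructor
  · exact le_max_of_le_left (le_min (neg_abs_le t) (le_trans (by simp) hM))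
  · exact max_le (le_trans (min_le_left _ _) (le_abs_self t))
      (le_trans (neg_nonpos.mpr hM) (abs_nonneg t))

lemma abs_NAtrunc_le' (M t : ℝ) (hM : 0 ≤ M) : |NAtrunc M t| ≤ M := by
  rw [abs_le]; constructor
  · simp [NAtrunc]
  · exact max_le (min_le_right _ _) (le_trans (neg_nonpos.mpr hM) hM)

lemma NAtrunc_tendsto (t : ℝ) : Tendsto (fun M : ℕ => NAtrunc M t) atTop (nhds t) := by
  have h : ∀ᶠ M : ℕ in atTop, NAtrunc M t = t := by
    filter_upwards [eventually_ge_atTop ⌈|t|⌉₊] with M hM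
    have h1 : |t| ≤ (M : ℝ) := le_trans (Nat.le_ceil _) (by exact_mod_cast hM)
    have := abs_le.mp h1
    simp [NAtrunc, min_eq_left this.2, max_eq_left this.1]
  exact Tendsto.congr' (h.mono fun M hM => hM.symm) tendsto_const_nhds

/-- To check negative association it is enough to consider bounded test functions. -/
lemma negAssoc_of_bdd {Ω : Type*} [MeasurableSpace Ω] (μ : Measure Ω)
    [IsProbabilityMeasure μ] {n : ℕ} (X : Fin n → Ω → ℝ)
    (h : ∀ A₁ A₂ : Finset (Fin n), Disjoint A₁ A₂ →
      ∀ f₁ : ({ i // i ∈ A₁ } → ℝ) → ℝ, ∀ f₂ : ({ i // i ∈ A₂ } → ℝ) → ℝ,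
      Monotone f₁ → Monotone f₂ → Measurable f₁ → Measurable f₂ →
      (∃ C₁, ∀ v, |f₁ v| ≤ C₁) → (∃ C₂, ∀ v, |f₂ v| ≤ C₂) →
      covar μ (fun ω => f₁ (fun i => X i.1 ω)) (fun ω => f₂ (fun i => X i.1 ω)) ≤ 0) :
    NegAssoc μ X := by
  intro A₁ A₂ hA f₁ f₂ hm₁ hm₂ hmeas₁ hmeas₂ hi₁ hi₂ hi₁₂
  have key : ∀ M : ℕ, covar μ (fun ω => NAtrunc M (f₁ (fun i => X i.1 ω)))
      (fun ω => NAtrunc M (f₂ (fun i => X i.1 ω))) ≤ 0 := by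
    intro M
    exact h A₁ A₂ hA (NAtrunc M ∘ f₁) (NAtrunc M ∘ f₂)
      ((NAtrunc_mono M).comp hm₁) ((NAtrunc_mono M).comp hm₂)
      ((NAtrunc_meas M).comp hmeas₁) ((NAtrunc_meas M).comp hmeas₂)
      ⟨M, fun v => abs_NAtrunc_le' _ _ (Nat.cast_nonneg M)⟩
      ⟨M, fun v => abs_NAtrunc_le' _ _ (Nat.cast_nonneg M)⟩
  set g₁ : Ω → ℝ := fun ω => f₁ (fun i => X i.1 ω) with hg₁
  set g₂ : Ω → ℝ := fun ω => f₂ (fun i => X i.1 ω) with hg₂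
  have hsm : ∀ M : ℕ, AEStronglyMeasurable (fun ω => NAtrunc M (g₁ ω)) μ :=
    fun M => (NAtrunc_cont M).comp_aestronglyMeasurable hi₁.1
  have hsm' : ∀ M : ℕ, AEStronglyMeasurable (fun ω => NAtrunc M (g₂ ω)) μ :=
    fun M => (NAtrunc_cont M).comp_aestronglyMeasurable hi₂.1
  have hT1 : Tendsto (fun M : ℕ => ∫ ω, NAtrunc M (g₁ ω) * NAtrunc M (g₂ ω) ∂μ) atTop
      (nhds (∫ ω, g₁ ω * g₂ ω ∂μ)) := by
    refine tendsto_integral_of_dominated_convergence (fun ω => |g₁ ω * g₂ ω|)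
      (fun M => (hsm M).mul (hsm' M)) hi₁₂.abs ?_ ?_
    · intro M
      refine Eventually.of_forall fun ω => ?_
      simp only [Real.norm_eq_abs, abs_mul]
      exact mul_le_mul (abs_NAtrunc_le _ _ (Nat.cast_nonneg M))
        (abs_NAtrunc_le _ _ (Nat.cast_nonneg M)) (abs_nonneg _) (abs_nonneg _)
    · exact Eventually.of_forall fun ω => (NAtrunc_tendsto _).mul (NAtrunc_tendsto _)
  have hT2 : Tendsto (fun M : ℕ => ∫ ω, NAtrunc M (g₁ ω) ∂μ) atTop
      (nhds (∫ ω, g₁ ω ∂μ)) := by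
    refine tendsto_integral_of_dominated_convergence (fun ω => |g₁ ω|) hsm hi₁.abs ?_ ?_
    · exact fun M => Eventually.of_forall fun ω => by
        rw [Real.norm_eq_abs]; exact abs_NAtrunc_le _ _ (Nat.cast_nonneg M)
    · exact Eventually.of_forall fun ω => NAtrunc_tendsto _
  have hT3 : Tendsto (fun M : ℕ => ∫ ω, NAtrunc M (g₂ ω) ∂μ) atTop
      (nhds (∫ ω, g₂ ω ∂μ)) := by
    refine tendsto_integral_of_dominated_convergence (fun ω => |g₂ ω|) hsm' hi₂.abs ?_ ?_
    · exact fun M => Eventually.of_forall fun ω => by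
        rw [Real.norm_eq_abs]; exact abs_NAtrunc_le _ _ (Nat.cast_nonneg M)
    · exact Eventually.of_forall fun ω => NAtrunc_tendsto _
  have hT : Tendsto (fun M : ℕ => covar μ (fun ω => NAtrunc M (g₁ ω))
      (fun ω => NAtrunc M (g₂ ω))) atTop (nhds (covar μ g₁ g₂)) := hT1.sub (hT2.mul hT3)
  exact le_of_tendsto hT (Eventually.of_forall key)

/-- Covariance decomposition on a product measure. -/
lemma covar_prod_le {α β : Type*} [MeasurableSpace α] [MeasurableSpace β]
    (P : Measure α) (Q : Measure β) [IsProbabilityMeasure P] [IsProbabilityMeasure Q]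
    (F₁ F₂ : α × β → ℝ) (h₁ : Measurable F₁) (h₂ : Measurable F₂)
    {C₁ C₂ : ℝ} (hb₁ : ∀ p, |F₁ p| ≤ C₁) (hb₂ : ∀ p, |F₂ p| ≤ C₂)
    (hcondX : ∀ y, covar P (fun x => F₁ (x, y)) (fun x => F₂ (x, y)) ≤ 0)
    (hcondY : covar Q (fun y => ∫ x, F₁ (x, y) ∂P) (fun y => ∫ x, F₂ (x, y) ∂P) ≤ 0) :
    covar (P.prod Q) F₁ F₂ ≤ 0 := by
  set D₁ := max C₁ 0 with hD₁
  set D₂ := max C₂ 0 with hD₂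
  have hb₁' : ∀ p, |F₁ p| ≤ D₁ := fun p => le_trans (hb₁ p) (le_max_left _ _)
  have hb₂' : ∀ p, |F₂ p| ≤ D₂ := fun p => le_trans (hb₂ p) (le_max_left _ _)
  have hD₁0 : 0 ≤ D₁ := le_max_right _ _
  have hD₂0 : 0 ≤ D₂ := le_max_right _ _
  have hb₁₂ : ∀ p, |F₁ p * F₂ p| ≤ D₁ * D₂ := fun p => by
    rw [abs_mul]
    exact mul_le_mul (hb₁' p) (hb₂' p) (abs_nonneg _) hD₁0
  have hi₁ : Integrable F₁ (P.prod Q) := NA_integrable_of_bdd h₁.aestronglyMeasurable hb₁'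
  have hi₂ : Integrable F₂ (P.prod Q) := NA_integrable_of_bdd h₂.aestronglyMeasurable hb₂'
  have hi₁₂ : Integrable (fun p => F₁ p * F₂ p) (P.prod Q) :=
    NA_integrable_of_bdd (h₁.mul h₂).aestronglyMeasurable hb₁₂
  set g₁ : β → ℝ := fun y => ∫ x, F₁ (x, y) ∂P with hg₁def
  set g₂ : β → ℝ := fun y => ∫ x, F₂ (x, y) ∂P with hg₂def
  set m : β → ℝ := fun y => ∫ x, F₁ (x, y) * F₂ (x, y) ∂P with hmdef
  have hg₁m : StronglyMeasurable g₁ := h₁.stronglyMeasurable.integral_prod_left'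
  have hg₂m : StronglyMeasurable g₂ := h₂.stronglyMeasurable.integral_prod_left'
  have hmm : StronglyMeasurable m := (h₁.mul h₂).stronglyMeasurable.integral_prod_left'
  have hbint : ∀ (G : α × β → ℝ) (D : ℝ), (∀ p, |G p| ≤ D) →
      ∀ y : β, |∫ x, G (x, y) ∂P| ≤ D := by
    intro G D hG y
    rw [← Real.norm_eq_abs]
    calc ‖∫ x, G (x, y) ∂P‖ ≤ D * (P Set.univ).toReal :=
          norm_integral_le_of_norm_le_const (Filter.Eventually.of_forall fun x => by
            simpa [Real.norm_eq_abs] using hG (x, y))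
      _ = D := by simp
  have hbg₁ : ∀ y, |g₁ y| ≤ D₁ := hbint F₁ D₁ hb₁'
  have hbg₂ : ∀ y, |g₂ y| ≤ D₂ := hbint F₂ D₂ hb₂'
  have hbm : ∀ y, |m y| ≤ D₁ * D₂ := hbint _ _ hb₁₂
  have hig₁ : Integrable g₁ Q := NA_integrable_of_bdd hg₁m.aestronglyMeasurable hbg₁
  have hig₂ : Integrable g₂ Q := NA_integrable_of_bdd hg₂m.aestronglyMeasurable hbg₂
  have him : Integrable m Q := NA_integrable_of_bdd hmm.aestronglyMeasurable hbm
  have hig₁g₂ : Integrable (fun y => g₁ y * g₂ y) Q :=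
    NA_integrable_of_bdd (hg₁m.mul hg₂m).aestronglyMeasurable (fun y => by
      rw [abs_mul]; exact mul_le_mul (hbg₁ y) (hbg₂ y) (abs_nonneg _) hD₁0)
  have hF1 : ∫ p, F₁ p ∂(P.prod Q) = ∫ y, g₁ y ∂Q := integral_prod_symm F₁ hi₁
  have hF2 : ∫ p, F₂ p ∂(P.prod Q) = ∫ y, g₂ y ∂Q := integral_prod_symm F₂ hi₂
  have hF12 : ∫ p, F₁ p * F₂ p ∂(P.prod Q) = ∫ y, m y ∂Q := integral_prod_symm _ hi₁₂
  have hsplit : ∫ y, m y ∂Q = (∫ y, m y - g₁ y * g₂ y ∂Q) + ∫ y, g₁ y * g₂ y ∂Q := by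
    rw [integral_sub him hig₁g₂]; ring
  have hterm1 : (∫ y, m y - g₁ y * g₂ y ∂Q) ≤ 0 :=
    integral_nonpos fun y => hcondX y
  have hterm2 : (∫ y, g₁ y * g₂ y ∂Q) - (∫ y, g₁ y ∂Q) * ∫ y, g₂ y ∂Q ≤ 0 := hcondY
  unfold covar
  rw [hF1, hF2, hF12, hsplit]
  linarith

end Aux

set_option maxHeartbeats 2000000 in
/-- The union of two independent sets of negatively associated random variables is
negatively associated. -/
theorem negAssoc_union_of_indep {Ω : Type*} [MeasurableSpace Ω] (μ : Measure Ω)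
    [IsProbabilityMeasure μ] {n₁ n₂ : ℕ} (X : Fin n₁ → Ω → ℝ) (Y : Fin n₂ → Ω → ℝ)
    (hXm : ∀ i, Measurable (X i)) (hYm : ∀ j, Measurable (Y j))
    (hX : NegAssoc μ X) (hY : NegAssoc μ Y)
    (hindep : IndepFun (fun ω (i : Fin n₁) => X i ω) (fun ω (j : Fin n₂) => Y j ω) μ) :
    NegAssoc μ (fun i : Fin (n₁ + n₂) =>
      Fin.addCases (motive := fun _ => Ω → ℝ) X Y i) := by
  have hXvm : Measurable (fun ω (i : Fin n₁) => X i ω) := measurable_pi_lambda _ hXm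
  have hYvm : Measurable (fun ω (j : Fin n₂) => Y j ω) := measurable_pi_lambda _ hYm
  set Xv := fun ω (i : Fin n₁) => X i ω with hXvdef
  set Yv := fun ω (j : Fin n₂) => Y j ω with hYvdef
  set P := μ.map Xv with hP
  set Q := μ.map Yv with hQ
  have hPprob : IsProbabilityMeasure P := Measure.isProbabilityMeasure_map hXvm.aemeasurable
  have hQprob : IsProbabilityMeasure Q := Measure.isProbabilityMeasure_map hYvm.aemeasurable
  have hprod : μ.map (fun ω => (Xv ω, Yv ω)) = P.prod Q :=
    (ProbabilityTheory.indepFun_iff_map_prod_eq_prod_map_map hXvm.aemeasurable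
      hYvm.aemeasurable).mp hindep
  set emb : (Fin n₁ → ℝ) × (Fin n₂ → ℝ) → (Fin (n₁ + n₂) → ℝ) :=
    fun p k => Fin.addCases (motive := fun _ => ℝ) p.1 p.2 k with hembdef
  have hembm : Measurable emb := by
    refine measurable_pi_lambda _ fun k => ?_
    refine Fin.addCases (motive := fun k =>
      Measurable fun p : (Fin n₁ → ℝ) × (Fin n₂ → ℝ) => emb p k) (fun i => ?_) (fun j => ?_) k
    · simp only [hembdef, Fin.addCases_left]; exact (measurable_pi_apply i).comp
        (measurable_fst : Measurable fun p : (Fin n₁ → ℝ) × (Fin n₂ → ℝ) => p.1)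
    · simp only [hembdef, Fin.addCases_right]; exact (measurable_pi_apply j).comp
        (measurable_snd : Measurable fun p : (Fin n₁ → ℝ) × (Fin n₂ → ℝ) => p.2)
  have hembmono : Monotone emb := by
    intro p q hpq k
    refine Fin.addCases (motive := fun k => emb p k ≤ emb q k) (fun i => ?_) (fun j => ?_) k
    · simpa [hembdef] using hpq.1 i
    · simpa [hembdef] using hpq.2 j
  have hpt : ∀ (ω : Ω) (k : Fin (n₁ + n₂)),
      Fin.addCases (motive := fun _ => Ω → ℝ) X Y k ω = emb (Xv ω, Yv ω) k := by
    intro ω k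
    refine Fin.addCases (motive := fun k =>
      Fin.addCases (motive := fun _ => Ω → ℝ) X Y k ω = emb (Xv ω, Yv ω) k)
      (fun i => ?_) (fun j => ?_) k <;> simp [hembdef, hXvdef, hYvdef]
  -- change of variables for integrals
  have hmapμ : ∀ (G : (Fin n₁ → ℝ) × (Fin n₂ → ℝ) → ℝ), Measurable G →
      ∫ ω, G (Xv ω, Yv ω) ∂μ = ∫ p, G p ∂(P.prod Q) := by
    intro G hG
    rw [← hprod, integral_map (hXvm.prodMk hYvm).aemeasurable hG.aestronglyMeasurable]
  have hmapP : ∀ (G : (Fin n₁ → ℝ) → ℝ), Measurable G →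
      ∫ x, G x ∂P = ∫ ω, G (Xv ω) ∂μ := by
    intro G hG
    rw [hP, integral_map hXvm.aemeasurable hG.aestronglyMeasurable]
  have hmapQ : ∀ (G : (Fin n₂ → ℝ) → ℝ), Measurable G →
      ∫ y, G y ∂Q = ∫ ω, G (Yv ω) ∂μ := by
    intro G hG
    rw [hQ, integral_map hYvm.aemeasurable hG.aestronglyMeasurable]
  -- reduce to bounded test functions
  refine negAssoc_of_bdd μ _ ?_
  intro A₁ A₂ hA f₁ f₂ hm₁ hm₂ hmeas₁ hmeas₂ hbdd₁ hbdd₂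
  obtain ⟨C₁', hC₁'⟩ := hbdd₁
  obtain ⟨C₂', hC₂'⟩ := hbdd₂
  set C₁ := max C₁' 0 with hC₁def
  set C₂ := max C₂' 0 with hC₂def
  have hC₁ : ∀ v, |f₁ v| ≤ C₁ := fun v => le_trans (hC₁' v) (le_max_left _ _)
  have hC₂ : ∀ v, |f₂ v| ≤ C₂ := fun v => le_trans (hC₂' v) (le_max_left _ _)
  have hC₁0 : 0 ≤ C₁ := le_max_right _ _
  have hC₂0 : 0 ≤ C₂ := le_max_right _ _
  -- two-variable versions of the test functions
  set F₁ : (Fin n₁ → ℝ) × (Fin n₂ → ℝ) → ℝ := fun p => f₁ (fun k => emb p k.1) with hF₁def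
  set F₂ : (Fin n₁ → ℝ) × (Fin n₂ → ℝ) → ℝ := fun p => f₂ (fun k => emb p k.1) with hF₂def
  have hF₁m : Measurable F₁ :=
    hmeas₁.comp (measurable_pi_lambda _ fun k => (measurable_pi_apply k.1).comp hembm)
  have hF₂m : Measurable F₂ :=
    hmeas₂.comp (measurable_pi_lambda _ fun k => (measurable_pi_apply k.1).comp hembm)
  have hF₁mono : Monotone F₁ := fun p q h => hm₁ (fun k => hembmono h k.1)
  have hF₂mono : Monotone F₂ := fun p q h => hm₂ (fun k => hembmono h k.1)
  have hF₁b : ∀ p, |F₁ p| ≤ C₁ := fun p => hC₁ _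
  have hF₂b : ∀ p, |F₂ p| ≤ C₂ := fun p => hC₂ _
  -- dependence: F only depends on the coordinates in A
  have hdep₁ : ∀ p q : (Fin n₁ → ℝ) × (Fin n₂ → ℝ),
      (∀ i : Fin n₁, Fin.castAdd n₂ i ∈ A₁ → p.1 i = q.1 i) →
      (∀ j : Fin n₂, Fin.natAdd n₁ j ∈ A₁ → p.2 j = q.2 j) → F₁ p = F₁ q := by
    intro p q hx hy
    simp only [hF₁def]
    refine congrArg f₁ (funext fun k => ?_)
    obtain ⟨k, hk⟩ := k
    revert hk
    refine Fin.addCases (motive := fun k => k ∈ A₁ → emb p k = emb q k)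
      (fun i hi => ?_) (fun j hj => ?_) k
    · simpa [hembdef] using hx i hi
    · simpa [hembdef] using hy j hj
  have hdep₂ : ∀ p q : (Fin n₁ → ℝ) × (Fin n₂ → ℝ),
      (∀ i : Fin n₁, Fin.castAdd n₂ i ∈ A₂ → p.1 i = q.1 i) →
      (∀ j : Fin n₂, Fin.natAdd n₁ j ∈ A₂ → p.2 j = q.2 j) → F₂ p = F₂ q := by
    intro p q hx hy
    simp only [hF₂def]
    refine congrArg f₂ (funext fun k => ?_)
    obtain ⟨k, hk⟩ := k
    revert hk
    refine Fin.addCases (motive := fun k => k ∈ A₂ → emb p k = emb q k)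
      (fun i hi => ?_) (fun j hj => ?_) k
    · simpa [hembdef] using hx i hi
    · simpa [hembdef] using hy j hj
  -- rewrite the goal through the product measure
  have hfeq₁ : (fun ω => f₁ (fun i : {i // i ∈ A₁} =>
      (fun i : Fin (n₁ + n₂) => Fin.addCases (motive := fun _ => Ω → ℝ) X Y i) i.1 ω))
      = fun ω => F₁ (Xv ω, Yv ω) := by
    funext ω
    simp only [hF₁def]
    exact congrArg f₁ (funext fun i => hpt ω i.1)
  have hfeq₂ : (fun ω => f₂ (fun i : {i // i ∈ A₂} =>
      (fun i : Fin (n₁ + n₂) => Fin.addCases (motive := fun _ => Ω → ℝ) X Y i) i.1 ω))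
      = fun ω => F₂ (Xv ω, Yv ω) := by
    funext ω
    simp only [hF₂def]
    exact congrArg f₂ (funext fun i => hpt ω i.1)
  have hcov : covar μ (fun ω => F₁ (Xv ω, Yv ω)) (fun ω => F₂ (Xv ω, Yv ω))
      = covar (P.prod Q) F₁ F₂ := by
    have e1 : ∫ ω, F₁ (Xv ω, Yv ω) * F₂ (Xv ω, Yv ω) ∂μ = ∫ p, F₁ p * F₂ p ∂(P.prod Q) :=
      hmapμ (fun p => F₁ p * F₂ p) (hF₁m.mul hF₂m)
    have e2 : ∫ ω, F₁ (Xv ω, Yv ω) ∂μ = ∫ p, F₁ p ∂(P.prod Q) := hmapμ F₁ hF₁m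
    have e3 : ∫ ω, F₂ (Xv ω, Yv ω) ∂μ = ∫ p, F₂ p ∂(P.prod Q) := hmapμ F₂ hF₂m
    simp only [covar]
    rw [e1, e2, e3]
  rw [hfeq₁, hfeq₂, hcov]
  -- now apply the product decomposition
  refine covar_prod_le P Q F₁ F₂ hF₁m hF₂m hF₁b hF₂b ?_ ?_
  · -- conditional on y : use negative association of X
    intro y
    classical
    set B₁ : Finset (Fin n₁) := Finset.univ.filter (fun i => Fin.castAdd n₂ i ∈ A₁) with hB₁
    set B₂ : Finset (Fin n₁) := Finset.univ.filter (fun i => Fin.castAdd n₂ i ∈ A₂) with hB₂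
    have hBdisj : Disjoint B₁ B₂ := by
      rw [Finset.disjoint_left]
      intro i hi₁ hi₂
      rw [hB₁, Finset.mem_filter] at hi₁
      rw [hB₂, Finset.mem_filter] at hi₂
      exact (Finset.disjoint_left.mp hA) hi₁.2 hi₂.2
    set ext₁ : ({i // i ∈ B₁} → ℝ) → (Fin n₁ → ℝ) :=
      fun v i => if h : i ∈ B₁ then v ⟨i, h⟩ else 0 with hext₁
    set ext₂ : ({i // i ∈ B₂} → ℝ) → (Fin n₁ → ℝ) :=
      fun v i => if h : i ∈ B₂ then v ⟨i, h⟩ else 0 with hext₂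
    have hext₁mono : Monotone ext₁ := by
      intro v w h i
      simp only [hext₁]
      by_cases h' : i ∈ B₁ <;> simp [h']
      exact h _
    have hext₂mono : Monotone ext₂ := by
      intro v w h i
      simp only [hext₂]
      by_cases h' : i ∈ B₂ <;> simp [h']
      exact h _
    have hext₁m : Measurable ext₁ := by
      refine measurable_pi_lambda _ fun i => ?_
      simp only [hext₁]
      by_cases h' : i ∈ B₁ <;> simp [h']
      exact measurable_pi_apply _
    have hext₂m : Measurable ext₂ := by
      refine measurable_pi_lambda _ fun i => ?_
      simp only [hext₂]
      by_cases h' : i ∈ B₂ <;> simp [h']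
      exact measurable_pi_apply _
    set f₁' : ({i // i ∈ B₁} → ℝ) → ℝ := fun v => F₁ (ext₁ v, y) with hf₁'
    set f₂' : ({i // i ∈ B₂} → ℝ) → ℝ := fun v => F₂ (ext₂ v, y) with hf₂'
    have hf₁'mono : Monotone f₁' := fun v w h => hF₁mono ⟨hext₁mono h, le_rfl⟩
    have hf₂'mono : Monotone f₂' := fun v w h => hF₂mono ⟨hext₂mono h, le_rfl⟩
    have hf₁'m : Measurable f₁' := hF₁m.comp (hext₁m.prodMk measurable_const)
    have hf₂'m : Measurable f₂' := hF₂m.comp (hext₂m.prodMk measurable_const)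
    have hf₁'b : ∀ v, |f₁' v| ≤ C₁ := fun v => hF₁b _
    have hf₂'b : ∀ v, |f₂' v| ≤ C₂ := fun v => hF₂b _
    have hXi₁ : Integrable (fun ω => f₁' (fun i => X i.1 ω)) μ :=
      NA_integrable_of_bdd ((hf₁'m.comp
        (measurable_pi_lambda _ fun i => hXm i.1)).aestronglyMeasurable)
        (fun ω => hf₁'b (fun i => X i.1 ω))
    have hXi₂ : Integrable (fun ω => f₂' (fun i => X i.1 ω)) μ :=
      NA_integrable_of_bdd ((hf₂'m.comp
        (measurable_pi_lambda _ fun i => hXm i.1)).aestronglyMeasurable)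
        (fun ω => hf₂'b (fun i => X i.1 ω))
    have hXi₁₂ : Integrable (fun ω => f₁' (fun i => X i.1 ω) * f₂' (fun i => X i.1 ω)) μ :=
      NA_integrable_of_bdd (((hf₁'m.comp
        (measurable_pi_lambda _ fun i => hXm i.1)).mul
        (hf₂'m.comp (measurable_pi_lambda _ fun i => hXm i.1))).aestronglyMeasurable)
        (fun ω => by
          rw [abs_mul]
          exact mul_le_mul (hf₁'b (fun i => X i.1 ω)) (hf₂'b (fun i => X i.1 ω)) (abs_nonneg _) hC₁0)
    have hXcov := hX B₁ B₂ hBdisj f₁' f₂' hf₁'mono hf₂'mono hf₁'m hf₂'m hXi₁ hXi₂ hXi₁₂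
    -- identify the composed functions
    have hkey₁ : ∀ ω, f₁' (fun i => X i.1 ω) = F₁ (Xv ω, y) := by
      intro ω
      simp only [hf₁']
      refine hdep₁ _ _ (fun i hi => ?_) (fun j hj => rfl)
      have hiB : i ∈ B₁ := by rw [hB₁, Finset.mem_filter]; exact ⟨Finset.mem_univ _, hi⟩
      simp [hext₁, hiB, hXvdef]
    have hkey₂ : ∀ ω, f₂' (fun i => X i.1 ω) = F₂ (Xv ω, y) := by
      intro ω
      simp only [hf₂']
      refine hdep₂ _ _ (fun i hi => ?_) (fun j hj => rfl)
      have hiB : i ∈ B₂ := by rw [hB₂, Finset.mem_filter]; exact ⟨Finset.mem_univ _, hi⟩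
      simp [hext₂, hiB, hXvdef]
    have hcovP : covar P (fun x => F₁ (x, y)) (fun x => F₂ (x, y))
        = covar μ (fun ω => f₁' (fun i => X i.1 ω)) (fun ω => f₂' (fun i => X i.1 ω)) := by
      have e1 : ∫ x, F₁ (x, y) * F₂ (x, y) ∂P = ∫ ω, F₁ (Xv ω, y) * F₂ (Xv ω, y) ∂μ :=
        hmapP (fun x => F₁ (x, y) * F₂ (x, y))
          ((hF₁m.comp (measurable_id.prodMk measurable_const)).mul
           (hF₂m.comp (measurable_id.prodMk measurable_const)))
      have e2 : ∫ x, F₁ (x, y) ∂P = ∫ ω, F₁ (Xv ω, y) ∂μ :=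
        hmapP (fun x => F₁ (x, y)) (hF₁m.comp (measurable_id.prodMk measurable_const))
      have e3 : ∫ x, F₂ (x, y) ∂P = ∫ ω, F₂ (Xv ω, y) ∂μ :=
        hmapP (fun x => F₂ (x, y)) (hF₂m.comp (measurable_id.prodMk measurable_const))
      simp only [covar]
      rw [e1, e2, e3]
      simp only [hkey₁, hkey₂]
    rw [hcovP]
    exact hXcov
  · -- conditional means: use negative association of Y
    classical
    set D₁ : Finset (Fin n₂) := Finset.univ.filter (fun j => Fin.natAdd n₁ j ∈ A₁) with hD₁
    set D₂ : Finset (Fin n₂) := Finset.univ.filter (fun j => Fin.natAdd n₁ j ∈ A₂) with hD₂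
    have hDdisj : Disjoint D₁ D₂ := by
      rw [Finset.disjoint_left]
      intro j hj₁ hj₂
      rw [hD₁, Finset.mem_filter] at hj₁
      rw [hD₂, Finset.mem_filter] at hj₂
      exact (Finset.disjoint_left.mp hA) hj₁.2 hj₂.2
    set ext₁ : ({j // j ∈ D₁} → ℝ) → (Fin n₂ → ℝ) :=
      fun w j => if h : j ∈ D₁ then w ⟨j, h⟩ else 0 with hext₁
    set ext₂ : ({j // j ∈ D₂} → ℝ) → (Fin n₂ → ℝ) :=
      fun w j => if h : j ∈ D₂ then w ⟨j, h⟩ else 0 with hext₂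
    have hext₁mono : Monotone ext₁ := by
      intro v w h j
      simp only [hext₁]
      by_cases h' : j ∈ D₁ <;> simp [h']
      exact h _
    have hext₂mono : Monotone ext₂ := by
      intro v w h j
      simp only [hext₂]
      by_cases h' : j ∈ D₂ <;> simp [h']
      exact h _
    have hext₁m : Measurable ext₁ := by
      refine measurable_pi_lambda _ fun j => ?_
      simp only [hext₁]
      by_cases h' : j ∈ D₁ <;> simp [h']
      exact measurable_pi_apply _
    have hext₂m : Measurable ext₂ := by
      refine measurable_pi_lambda _ fun j => ?_
      simp only [hext₂]
      by_cases h' : j ∈ D₂ <;> simp [h']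
      exact measurable_pi_apply _
    -- parametric integrability in the first variable
    have hiF₁ : ∀ y : Fin n₂ → ℝ, Integrable (fun x => F₁ (x, y)) P := fun y =>
      NA_integrable_of_bdd
        ((hF₁m.comp (measurable_id.prodMk measurable_const)).aestronglyMeasurable)
        (fun x => hF₁b _)
    have hiF₂ : ∀ y : Fin n₂ → ℝ, Integrable (fun x => F₂ (x, y)) P := fun y =>
      NA_integrable_of_bdd
        ((hF₂m.comp (measurable_id.prodMk measurable_const)).aestronglyMeasurable)
        (fun x => hF₂b _)
    set f₁'' : ({j // j ∈ D₁} → ℝ) → ℝ := fun w => ∫ x, F₁ (x, ext₁ w) ∂P with hf₁''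
    set f₂'' : ({j // j ∈ D₂} → ℝ) → ℝ := fun w => ∫ x, F₂ (x, ext₂ w) ∂P with hf₂''
    have hf₁''mono : Monotone f₁'' := by
      intro v w h
      exact integral_mono (hiF₁ _) (hiF₁ _) (fun x => hF₁mono ⟨le_rfl, hext₁mono h⟩)
    have hf₂''mono : Monotone f₂'' := by
      intro v w h
      exact integral_mono (hiF₂ _) (hiF₂ _) (fun x => hF₂mono ⟨le_rfl, hext₂mono h⟩)
    have hg₁sm : StronglyMeasurable (fun y => ∫ x, F₁ (x, y) ∂P) :=
      hF₁m.stronglyMeasurable.integral_prod_left'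
    have hg₂sm : StronglyMeasurable (fun y => ∫ x, F₂ (x, y) ∂P) :=
      hF₂m.stronglyMeasurable.integral_prod_left'
    have hf₁''m : Measurable f₁'' := hg₁sm.measurable.comp hext₁m
    have hf₂''m : Measurable f₂'' := hg₂sm.measurable.comp hext₂m
    have hbint : ∀ (G : (Fin n₁ → ℝ) × (Fin n₂ → ℝ) → ℝ) (D : ℝ), (∀ p, |G p| ≤ D) →
        ∀ y : Fin n₂ → ℝ, |∫ x, G (x, y) ∂P| ≤ D := by
      intro G D hG y
      rw [← Real.norm_eq_abs]
      calc ‖∫ x, G (x, y) ∂P‖ ≤ D * (P Set.univ).toReal :=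
            norm_integral_le_of_norm_le_const (Filter.Eventually.of_forall fun x => by
              simpa [Real.norm_eq_abs] using hG (x, y))
        _ = D := by simp
    have hf₁''b : ∀ w, |f₁'' w| ≤ C₁ := fun w => hbint F₁ C₁ hF₁b _
    have hf₂''b : ∀ w, |f₂'' w| ≤ C₂ := fun w => hbint F₂ C₂ hF₂b _
    have hYi₁ : Integrable (fun ω => f₁'' (fun j => Y j.1 ω)) μ :=
      NA_integrable_of_bdd ((hf₁''m.comp
        (measurable_pi_lambda _ fun j => hYm j.1)).aestronglyMeasurable)
        (fun ω => hf₁''b (fun j => Y j.1 ω))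
    have hYi₂ : Integrable (fun ω => f₂'' (fun j => Y j.1 ω)) μ :=
      NA_integrable_of_bdd ((hf₂''m.comp
        (measurable_pi_lambda _ fun j => hYm j.1)).aestronglyMeasurable)
        (fun ω => hf₂''b (fun j => Y j.1 ω))
    have hYi₁₂ : Integrable (fun ω => f₁'' (fun j => Y j.1 ω) * f₂'' (fun j => Y j.1 ω)) μ :=
      NA_integrable_of_bdd (((hf₁''m.comp
        (measurable_pi_lambda _ fun j => hYm j.1)).mul
        (hf₂''m.comp (measurable_pi_lambda _ fun j => hYm j.1))).aestronglyMeasurable)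
        (fun ω => by
          rw [abs_mul]
          exact mul_le_mul (hf₁''b (fun j => Y j.1 ω)) (hf₂''b (fun j => Y j.1 ω)) (abs_nonneg _) hC₁0)
    have hYcov := hY D₁ D₂ hDdisj f₁'' f₂'' hf₁''mono hf₂''mono hf₁''m hf₂''m hYi₁ hYi₂ hYi₁₂
    have hkey₁ : ∀ ω, f₁'' (fun j => Y j.1 ω) = ∫ x, F₁ (x, Yv ω) ∂P := by
      intro ω
      simp only [hf₁'']
      refine congrArg (fun G : (Fin n₁ → ℝ) → ℝ => ∫ x, G x ∂P) (funext fun x => ?_)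
      refine hdep₁ _ _ (fun i hi => rfl) (fun j hj => ?_)
      have hjD : j ∈ D₁ := by rw [hD₁, Finset.mem_filter]; exact ⟨Finset.mem_univ _, hj⟩
      simp [hext₁, hjD, hYvdef]
    have hkey₂ : ∀ ω, f₂'' (fun j => Y j.1 ω) = ∫ x, F₂ (x, Yv ω) ∂P := by
      intro ω
      simp only [hf₂'']
      refine congrArg (fun G : (Fin n₁ → ℝ) → ℝ => ∫ x, G x ∂P) (funext fun x => ?_)
      refine hdep₂ _ _ (fun i hi => rfl) (fun j hj => ?_)
      have hjD : j ∈ D₂ := by rw [hD₂, Finset.mem_filter]; exact ⟨Finset.mem_univ _, hj⟩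
      simp [hext₂, hjD, hYvdef]
    have hcovQ : covar Q (fun y => ∫ x, F₁ (x, y) ∂P) (fun y => ∫ x, F₂ (x, y) ∂P)
        = covar μ (fun ω => f₁'' (fun j => Y j.1 ω)) (fun ω => f₂'' (fun j => Y j.1 ω)) := by
      have e1 : ∫ y, (∫ x, F₁ (x, y) ∂P) * (∫ x, F₂ (x, y) ∂P) ∂Q
          = ∫ ω, (∫ x, F₁ (x, Yv ω) ∂P) * (∫ x, F₂ (x, Yv ω) ∂P) ∂μ :=
        hmapQ (fun y => (∫ x, F₁ (x, y) ∂P) * (∫ x, F₂ (x, y) ∂P))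
          (hg₁sm.measurable.mul hg₂sm.measurable)
      have e2 : ∫ y, (∫ x, F₁ (x, y) ∂P) ∂Q = ∫ ω, (∫ x, F₁ (x, Yv ω) ∂P) ∂μ :=
        hmapQ _ hg₁sm.measurable
      have e3 : ∫ y, (∫ x, F₂ (x, y) ∂P) ∂Q = ∫ ω, (∫ x, F₂ (x, Yv ω) ∂P) ∂μ :=
        hmapQ _ hg₂sm.measurable
      simp only [covar]
      rw [e1, e2, e3]
      simp only [hkey₁, hkey₂]
    rw [hcovQ]
    exact hYcov
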